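/- arXiv:2202.07904 — 2 statements merged into one kernel-verified Lean document; each statement's English description precedes it below -/
import Mathlib

section
/- Let $A$, $F$, $U$ be independent random variables where $A = \sum_{i=1}^{n}(\mathsf{Geom}_i(1-\beta)-1)$, $F = 1 + \sum_{i=1}^{n-1}\mathsf{Be}_i(1-d)$, and $U = \mathsf{Geom}(1-d)-1$. If $\frac{\beta}{1-\beta} < \eta(1-d)$ for some $\eta \in (0,1]$, then there exists a constant $c > 0$ (independent of $n$) such that $P(A \geq \eta F - U) \leq e^{-cn}$ for all $n \geq 1$. -/
open MeasureTheory ProbabilityTheory Real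

lemma aux_lintegral_comp_nat {Ω : Type*} [MeasurableSpace Ω] (μ : Measure Ω)
    (X : Ω → ℕ) (hX : Measurable X) (f : ℕ → ENNReal) :
    ∫⁻ ω, f (X ω) ∂μ = ∑' k, f k * μ {ω | X ω = k} := by
  rw [← lintegral_map (measurable_of_countable f) hX, lintegral_countable']
  refine tsum_congr fun k => ?_
  rw [Measure.map_apply hX (measurableSet_singleton k)]
  rfl

lemma aux_meas_point {Ω : Type*} [MeasurableSpace Ω] (μ : Measure Ω)
    (X : Ω → ℕ) (hX : Measurable X) (m : ℕ) (a b : ℝ) (hb0 : 0 ≤ b)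
    (h1 : μ {ω | m ≤ X ω} = ENNReal.ofReal a) (h2 : μ {ω | m + 1 ≤ X ω} = ENNReal.ofReal b) :
    μ {ω | X ω = m} = ENNReal.ofReal (a - b) := by
  have hsplit : {ω | m ≤ X ω} = {ω | X ω = m} ∪ {ω | m + 1 ≤ X ω} := by
    ext ω; simp only [Set.mem_setOf_eq, Set.mem_union]; omega
  have hdisj : Disjoint {ω | X ω = m} {ω | m + 1 ≤ X ω} := by
    rw [Set.disjoint_left]; intro ω h1' h2'; simp only [Set.mem_setOf_eq] at *; omega
  have hm2 : MeasurableSet {ω | m + 1 ≤ X ω} := hX measurableSet_Ici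
  have hmu := measure_union (μ := μ) hdisj hm2
  rw [← hsplit, h1, h2] at hmu
  rw [ENNReal.ofReal_sub a hb0, hmu]
  simp [ENNReal.add_sub_cancel_right, ENNReal.ofReal_ne_top]

lemma aux_lintegral_prod_indep {ι Ω : Type*} [MeasurableSpace Ω] (μ : Measure Ω)
    [IsProbabilityMeasure μ] (V : ι → Ω → ENNReal) (hVm : ∀ i, Measurable (V i))
    (hVi : iIndepFun V μ) (s : Finset ι) :
    ∫⁻ ω, ∏ i ∈ s, V i ω ∂μ = ∏ i ∈ s, ∫⁻ ω, V i ω ∂μ := by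
  classical
  refine Finset.induction_on s (by simp) ?_
  intro a s ha ih
  have hind : IndepFun (V a) (∏ j ∈ s, V j) μ :=
    (hVi.indepFun_finsetProd_of_notMem hVm ha).symm
  have hprodmeas : Measurable (fun ω => ∏ j ∈ s, V j ω) :=
    Finset.measurable_prod s fun i _ => hVm i
  have hfun : (fun ω => ∏ j ∈ s, V j ω) = ∏ j ∈ s, V j := by
    funext ω; simp
  have key := lintegral_mul_eq_lintegral_mul_lintegral_of_indepFun (μ := μ) (hVm a) hprodmeas
    (by rwa [← hfun] at hind)
  simp only [Pi.mul_apply] at key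
  calc ∫⁻ ω, ∏ i ∈ insert a s, V i ω ∂μ
      = ∫⁻ ω, V a ω * ∏ i ∈ s, V i ω ∂μ := by simp_rw [Finset.prod_insert ha]
    _ = (∫⁻ ω, V a ω ∂μ) * ∫⁻ ω, ∏ i ∈ s, V i ω ∂μ := key
    _ = ∏ i ∈ insert a s, ∫⁻ ω, V i ω ∂μ := by rw [ih, Finset.prod_insert ha]

lemma aux_tsum_geom (x c : ℝ) (hx0 : 0 ≤ x) (hx1 : x < 1) (hc : 0 ≤ c) :
    ∑' k : ℕ, ENNReal.ofReal (c * x ^ k) = ENNReal.ofReal (c / (1 - x)) := by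
  have h1x : 0 < 1 - x := by linarith
  simp_rw [ENNReal.ofReal_mul hc, ENNReal.ofReal_pow hx0]
  rw [ENNReal.tsum_mul_left, ENNReal.tsum_geometric, div_eq_mul_inv, ENNReal.ofReal_mul hc]
  congr 1
  rw [← ENNReal.ofReal_one, ← ENNReal.ofReal_sub 1 hx0, ENNReal.ofReal_inv_of_pos h1x]

/-- The exponent functions used in the Chernoff bound. -/
def psiAux (t η : ℝ) : (ℕ ⊕ (ℕ ⊕ Unit)) → ℕ → ℝ := fun x k =>
  Sum.elim (fun _ => t * ((k : ℝ) - 1))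
    (Sum.elim (fun _ => -(t * η) * (k : ℝ)) (fun _ => t * (k : ℝ))) x

set_option maxHeartbeats 2000000 in
theorem stmt_6 {Ω : Type*} [MeasurableSpace Ω] (μ : Measure Ω) [IsProbabilityMeasure μ]
    (β d η : ℝ) (hβ0 : 0 < β) (hβ1 : β < 1) (hd0 : 0 ≤ d) (hd1 : d < 1)
    (hη : η ∈ Set.Ioc (0 : ℝ) 1) (hadv : β / (1 - β) < η * (1 - d))
    -- the family: `Sum.inl i` are the geometric variables `Geom_i (1-β)`,
    -- `Sum.inr (Sum.inl i)` are the Bernoulli variables `Be_i (1-d)`,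
    -- and `Sum.inr (Sum.inr ())` is the geometric variable underlying `U`.
    (Z : (ℕ ⊕ (ℕ ⊕ Unit)) → Ω → ℕ) (hmeas : ∀ x, Measurable (Z x))
    (hindep : iIndepFun Z μ)
    (hgeom : ∀ i : ℕ, ∀ k : ℕ, 1 ≤ k →
      μ {ω | k ≤ Z (Sum.inl i) ω} = ENNReal.ofReal (β ^ (k - 1)))
    (hgeom1 : ∀ i : ℕ, ∀ ω, 1 ≤ Z (Sum.inl i) ω)
    (hber : ∀ i : ℕ, μ {ω | Z (Sum.inr (Sum.inl i)) ω = 1} = ENNReal.ofReal (1 - d))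
    (hberval : ∀ i : ℕ, ∀ ω, Z (Sum.inr (Sum.inl i)) ω ≤ 1)
    (hU : ∀ k : ℕ, μ {ω | k ≤ Z (Sum.inr (Sum.inr ())) ω} = ENNReal.ofReal (d ^ k))
    (A F : ℕ → Ω → ℝ) (U : Ω → ℝ)
    (hA : ∀ n ω, A n ω = ∑ i ∈ Finset.range n, ((Z (Sum.inl i) ω : ℝ) - 1))
    (hF : ∀ n ω, F n ω = 1 + ∑ i ∈ Finset.range (n - 1), (Z (Sum.inr (Sum.inl i)) ω : ℝ))
    (hUdef : ∀ ω, U ω = (Z (Sum.inr (Sum.inr ())) ω : ℝ)) :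
    ∃ c : ℝ, 0 < c ∧ ∀ n : ℕ, 1 ≤ n →
      μ {ω | η * F n ω - U ω ≤ A n ω} ≤ ENNReal.ofReal (Real.exp (-c * n)) := by
  classical
  obtain ⟨hη0, hη1⟩ := hη
  have h1β : (0:ℝ) < 1 - β := by linarith
  have h1d : (0:ℝ) < 1 - d := by linarith
  set δ : ℝ := (1 - β) * (η * (1 - d)) - β with hδdef
  have hδpos : 0 < δ := by
    have h := (div_lt_iff₀ h1β).mp hadv
    rw [hδdef]; nlinarith
  clear_value δ
  set t : ℝ := min 1 (min ((1 - β)/4) (min ((1 - d)/4) (δ/2))) with htdef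
  have ht0 : 0 < t := by
    rw [htdef]
    apply lt_min one_pos
    apply lt_min (by linarith)
    exact lt_min (by linarith) (by linarith)
  have ht1 : t ≤ 1 := by rw [htdef]; exact min_le_left _ _
  have htβ : t ≤ (1 - β)/4 := by
    rw [htdef]; exact le_trans (min_le_right _ _) (min_le_left _ _)
  have htd : t ≤ (1 - d)/4 := by
    rw [htdef]; exact le_trans (min_le_right _ _) (le_trans (min_le_right _ _) (min_le_left _ _))
  have htδ : t ≤ δ/2 := by
    rw [htdef]; exact le_trans (min_le_right _ _) (le_trans (min_le_right _ _) (min_le_right _ _))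
  have ht1' : t < 1 := lt_of_le_of_lt htβ (by linarith)
  clear_value t
  set Et : ℝ := Real.exp t with hEtdef
  have hEt0 : 0 < Et := Real.exp_pos t
  have hEtb : Et * (1 - t) ≤ 1 := by
    have h := Real.add_one_le_exp (-t)
    have : (1 - t) ≤ Real.exp (-t) := by linarith
    calc Et * (1 - t) ≤ Et * Real.exp (-t) := by
          apply mul_le_mul_of_nonneg_left this hEt0.le
      _ = 1 := by rw [hEtdef, ← Real.exp_add]; simp
  clear_value Et
  have hβEt : β * Et < 1 := by nlinarith
  have hdEt : d * Et < 1 := by nlinarith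
  set E' : ℝ := Real.exp (-(t * η)) with hE'def
  have hE'0 : 0 < E' := Real.exp_pos _
  have hE'b : E' * (1 + t * η) ≤ 1 := by
    have h := Real.add_one_le_exp (t * η)
    calc E' * (1 + t * η) ≤ E' * Real.exp (t * η) := by
          apply mul_le_mul_of_nonneg_left (by linarith) hE'0.le
      _ = 1 := by rw [hE'def, ← Real.exp_add]; simp
  clear_value E'
  set g : ℝ := (1 - β)/(1 - β * Et) with hgdef
  set b : ℝ := d + (1 - d) * E' with hbdef
  set u : ℝ := (1 - d)/(1 - d * Et) with hudef
  have hg0 : 0 < g := by rw [hgdef]; exact div_pos h1β (by linarith)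
  have hb0 : 0 < b := by rw [hbdef]; positivity
  have hu0 : 0 < u := by rw [hudef]; exact div_pos h1d (by linarith)
  clear_value g b u
  have htη0 : 0 < t * η := mul_pos ht0 hη0
  -- the key inequality : g * b < 1
  have hkey : (1 - β) * b < 1 - β * Et := by
    have hz0 : 0 ≤ 1 - (1 - β) * d := by nlinarith
    have hz1 : η * (1 - (1 - β) * d) ≤ 1 := by nlinarith
    have e1 : (t * t) * (η * (1 - (1 - β) * d)) ≤ t * t := by
      have := mul_le_mul_of_nonneg_left hz1 (mul_nonneg ht0.le ht0.le)
      linarith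
    have e2 : t * t ≤ t * (δ / 2) := mul_le_mul_of_nonneg_left htδ ht0.le
    have hpoly : (1 - β) * (1 + d * t * η) * (1 - t) < (1 - t - β) * (1 + t * η) := by
      have hring : (1 - t - β) * (1 + t * η) - (1 - β) * (1 + d * t * η) * (1 - t)
          = t * δ - (t * t) * (η * (1 - (1 - β) * d)) := by
        rw [hδdef]; ring
      linarith [hring, e1, e2, mul_pos ht0 hδpos]
    have hbub : b * (1 + t * η) ≤ 1 + d * t * η := by
      have h2 : (1 - d) * (E' * (1 + t * η)) ≤ (1 - d) * 1 :=
        mul_le_mul_of_nonneg_left hE'b h1d.le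
      rw [hbdef]; nlinarith [h2]
    have hEtub : β * (Et * (1 - t)) ≤ β * 1 := mul_le_mul_of_nonneg_left hEtb hβ0.le
    have hp1 : 0 < 1 + t * η := by positivity
    have hp2 : 0 < 1 - t := by linarith
    have hbb : ((1 - β) * b * (1 - t)) * (1 + t * η) < (1 - t - β) * (1 + t * η) := by
      have h4 : ((1 - β) * (1 - t)) * (b * (1 + t * η)) ≤ ((1 - β) * (1 - t)) * (1 + d * t * η) :=
        mul_le_mul_of_nonneg_left hbub (mul_nonneg h1β.le hp2.le)
      calc ((1 - β) * b * (1 - t)) * (1 + t * η)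
          = ((1 - β) * (1 - t)) * (b * (1 + t * η)) := by ring
        _ ≤ ((1 - β) * (1 - t)) * (1 + d * t * η) := h4
        _ = (1 - β) * (1 + d * t * η) * (1 - t) := by ring
        _ < (1 - t - β) * (1 + t * η) := hpoly
    have s2 : (1 - β) * b * (1 - t) < 1 - t - β := lt_of_mul_lt_mul_right hbb hp1.le
    have s4 : 1 - t - β ≤ (1 - β * Et) * (1 - t) := by nlinarith [hEtub]
    have s5 : ((1 - β) * b) * (1 - t) < (1 - β * Et) * (1 - t) := by nlinarith [s2, s4]
    exact lt_of_mul_lt_mul_right s5 hp2.le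
  have hgb1 : g * b < 1 := by
    rw [hgdef, div_mul_eq_mul_div, div_lt_one (by linarith)]
    exact hkey
  have hgb0 : 0 < g * b := mul_pos hg0 hb0
  -- per-variable integrals
  set V : (ℕ ⊕ (ℕ ⊕ Unit)) → Ω → ENNReal :=
    fun x ω => ENNReal.ofReal (Real.exp (psiAux t η x (Z x ω))) with hVdef
  have hVmeas : ∀ x, Measurable (V x) := fun x =>
    (measurable_of_countable (fun k => ENNReal.ofReal (Real.exp (psiAux t η x k)))).comp (hmeas x)
  have hVindep : iIndepFun V μ :=
    hindep.comp (fun x k => ENNReal.ofReal (Real.exp (psiAux t η x k)))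
      (fun x => measurable_of_countable _)
  have Igeom : ∀ i : ℕ, ∫⁻ ω, V (Sum.inl i) ω ∂μ = ENNReal.ofReal g := by
    intro i
    rw [hVdef]
    rw [aux_lintegral_comp_nat μ (Z (Sum.inl i)) (hmeas _)
      (fun k => ENNReal.ofReal (Real.exp (psiAux t η (Sum.inl i) k)))]
    have hmass : ∀ k : ℕ, μ {ω | Z (Sum.inl i) ω = k + 1}
        = ENNReal.ofReal ((1 - β) * β ^ k) := by
      intro k
      have h1 := hgeom i (k+1) (by omega)
      have h2 := hgeom i (k+2) (by omega)
      have e1 : k + 1 - 1 = k := by omega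
      have e2 : k + 2 - 1 = k + 1 := by omega
      rw [e1] at h1
      rw [e2] at h2
      have hres := aux_meas_point μ (Z (Sum.inl i)) (hmeas _) (k+1) (β ^ k) (β ^ (k+1))
        (by positivity) h1 h2
      rw [hres]; congr 1; ring
    have hmass0 : μ {ω | Z (Sum.inl i) ω = 0} = 0 := by
      have he : {ω | Z (Sum.inl i) ω = 0} = ∅ := by
        ext ω
        simp only [Set.mem_setOf_eq, Set.mem_empty_iff_false, iff_false]
        have := hgeom1 i ω; omega
      rw [he]; simp
    rw [tsum_eq_zero_add' ENNReal.summable, hmass0, mul_zero, zero_add]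
    have hterm : ∀ k : ℕ,
        ENNReal.ofReal (Real.exp (psiAux t η (Sum.inl i) (k+1))) * μ {ω | Z (Sum.inl i) ω = k+1}
        = ENNReal.ofReal ((1 - β) * (β * Et) ^ k) := by
      intro k
      rw [hmass k, ← ENNReal.ofReal_mul (Real.exp_pos _).le]
      congr 1
      have hψ : psiAux t η (Sum.inl i) (k+1) = (k : ℝ) * t := by
        simp only [psiAux, Sum.elim_inl]; push_cast; ring
      rw [hψ, Real.exp_nat_mul, ← hEtdef, mul_pow]
      ring
    simp_rw [hterm]
    rw [aux_tsum_geom (β * Et) (1 - β) (mul_nonneg hβ0.le hEt0.le) hβEt h1β.le, hgdef]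
  have Iber : ∀ i : ℕ, ∫⁻ ω, V (Sum.inr (Sum.inl i)) ω ∂μ = ENNReal.ofReal b := by
    intro i
    rw [hVdef]
    rw [aux_lintegral_comp_nat μ (Z (Sum.inr (Sum.inl i))) (hmeas _)
      (fun k => ENNReal.ofReal (Real.exp (psiAux t η (Sum.inr (Sum.inl i)) k)))]
    have hm1 : μ {ω | Z (Sum.inr (Sum.inl i)) ω = 1} = ENNReal.ofReal (1 - d) := hber i
    have hm0 : μ {ω | Z (Sum.inr (Sum.inl i)) ω = 0} = ENNReal.ofReal d := by
      have hc : {ω | Z (Sum.inr (Sum.inl i)) ω = 0}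
          = {ω | Z (Sum.inr (Sum.inl i)) ω = 1}ᶜ := by
        ext ω
        simp only [Set.mem_setOf_eq, Set.mem_compl_iff]
        have := hberval i ω; omega
      rw [hc, prob_compl_eq_one_sub (show MeasurableSet {ω | Z (Sum.inr (Sum.inl i)) ω = 1}
        from (hmeas _) (measurableSet_singleton 1)), hm1,
        ← ENNReal.ofReal_one, ← ENNReal.ofReal_sub _ (by linarith : (0:ℝ) ≤ 1 - d)]
      norm_num
    have hm2 : ∀ k : ℕ, μ {ω | Z (Sum.inr (Sum.inl i)) ω = k + 2} = 0 := by
      intro k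
      have he : {ω | Z (Sum.inr (Sum.inl i)) ω = k + 2} = ∅ := by
        ext ω
        simp only [Set.mem_setOf_eq, Set.mem_empty_iff_false, iff_false]
        have := hberval i ω; omega
      rw [he]; simp
    rw [tsum_eq_zero_add' ENNReal.summable, tsum_eq_zero_add' ENNReal.summable]
    have htail : ∑' (k : ℕ),
        ENNReal.ofReal (Real.exp (psiAux t η (Sum.inr (Sum.inl i)) (k+1+1)))
          * μ {ω | Z (Sum.inr (Sum.inl i)) ω = k+1+1} = 0 := by
      rw [ENNReal.tsum_eq_zero]
      intro k
      have : μ {ω | Z (Sum.inr (Sum.inl i)) ω = k+1+1} = 0 := hm2 k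
      rw [this, mul_zero]
    rw [htail, add_zero]
    have e0 : psiAux t η (Sum.inr (Sum.inl i)) 0 = 0 := by
      simp [psiAux]
    have e1 : psiAux t η (Sum.inr (Sum.inl i)) 1 = -(t * η) := by
      simp [psiAux]
    rw [e0, e1, Real.exp_zero, hm0, hm1, ← hE'def, ENNReal.ofReal_one, one_mul,
      ← ENNReal.ofReal_mul hE'0.le, ← ENNReal.ofReal_add hd0 (by positivity), hbdef]
    congr 1
    ring
  have IU : ∫⁻ ω, V (Sum.inr (Sum.inr ())) ω ∂μ = ENNReal.ofReal u := by
    rw [hVdef]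
    rw [aux_lintegral_comp_nat μ (Z (Sum.inr (Sum.inr ()))) (hmeas _)
      (fun k => ENNReal.ofReal (Real.exp (psiAux t η (Sum.inr (Sum.inr ())) k)))]
    have hmass : ∀ k : ℕ, μ {ω | Z (Sum.inr (Sum.inr ())) ω = k}
        = ENNReal.ofReal ((1 - d) * d ^ k) := by
      intro k
      have h1 := hU k
      have h2 := hU (k+1)
      have hres := aux_meas_point μ (Z (Sum.inr (Sum.inr ()))) (hmeas _) k (d ^ k) (d ^ (k+1))
        (by positivity) h1 h2
      rw [hres]; congr 1; ring
    have hterm : ∀ k : ℕ,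
        ENNReal.ofReal (Real.exp (psiAux t η (Sum.inr (Sum.inr ())) k))
          * μ {ω | Z (Sum.inr (Sum.inr ())) ω = k}
        = ENNReal.ofReal ((1 - d) * (d * Et) ^ k) := by
      intro k
      rw [hmass k, ← ENNReal.ofReal_mul (Real.exp_pos _).le]
      congr 1
      have hψ : psiAux t η (Sum.inr (Sum.inr ())) k = (k : ℝ) * t := by
        simp only [psiAux, Sum.elim_inr]; ring
      rw [hψ, Real.exp_nat_mul, ← hEtdef, mul_pow]
      ring
    simp_rw [hterm]
    rw [aux_tsum_geom (d * Et) (1 - d) (mul_nonneg hd0 hEt0.le) hdEt h1d.le, hudef]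
  -- the Chernoff bound
  have main : ∀ n : ℕ, 1 ≤ n → μ {ω | η * F n ω - U ω ≤ A n ω} ≤
      ENNReal.ofReal (E' * g ^ n * b ^ (n - 1) * u) := by
    intro n hn
    have hinl_inj : ∀ x ∈ Finset.range n, ∀ y ∈ Finset.range n,
        (Sum.inl x : ℕ ⊕ (ℕ ⊕ Unit)) = Sum.inl y → x = y := fun x _ y _ h => Sum.inl.inj h
    have hinrl_inj : ∀ x ∈ Finset.range (n-1), ∀ y ∈ Finset.range (n-1),
        (Sum.inr (Sum.inl x) : ℕ ⊕ (ℕ ⊕ Unit)) = Sum.inr (Sum.inl y) → x = y := by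
      intro x _ y _ h
      simpa using h
    set S1 : Finset (ℕ ⊕ (ℕ ⊕ Unit)) := (Finset.range n).image Sum.inl with hS1
    set S2 : Finset (ℕ ⊕ (ℕ ⊕ Unit)) :=
      (Finset.range (n-1)).image (fun i => Sum.inr (Sum.inl i)) with hS2
    set S3 : Finset (ℕ ⊕ (ℕ ⊕ Unit)) := {Sum.inr (Sum.inr ())} with hS3
    have hd12 : Disjoint S1 S2 := by
      rw [Finset.disjoint_left]
      intro x hx1 hx2
      rw [hS1, Finset.mem_image] at hx1
      rw [hS2, Finset.mem_image] at hx2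
      obtain ⟨i, _, rfl⟩ := hx1
      obtain ⟨j, _, hj⟩ := hx2
      exact absurd hj (by simp)
    have hd123 : Disjoint (S1 ∪ S2) S3 := by
      rw [Finset.disjoint_left]
      intro x hx1 hx3
      rw [hS3, Finset.mem_singleton] at hx3
      subst hx3
      rw [Finset.mem_union, hS1, hS2, Finset.mem_image, Finset.mem_image] at hx1
      rcases hx1 with ⟨i, _, h⟩ | ⟨i, _, h⟩ <;> simp at h
    set Sn : Finset (ℕ ⊕ (ℕ ⊕ Unit)) := (S1 ∪ S2) ∪ S3 with hSn
    have hptw : ∀ ω, ENNReal.ofReal (Real.exp (-(t*η))) * ∏ x ∈ Sn, V x ω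
        = ENNReal.ofReal (Real.exp (t * (A n ω - η * F n ω + U ω))) := by
      intro ω
      have hsum : t * (A n ω - η * F n ω + U ω) = -(t*η) + ∑ x ∈ Sn, psiAux t η x (Z x ω) := by
        rw [hSn, Finset.sum_union hd123, Finset.sum_union hd12, hS1, hS2, hS3,
          Finset.sum_image hinl_inj, Finset.sum_image hinrl_inj, Finset.sum_singleton]
        simp only [psiAux, Sum.elim_inl, Sum.elim_inr]
        rw [hA n ω, hF n ω, hUdef ω, ← Finset.mul_sum, ← Finset.mul_sum]
        ring
      rw [hsum, Real.exp_add, ENNReal.ofReal_mul (Real.exp_pos _).le, Real.exp_sum,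
        ENNReal.ofReal_prod_of_nonneg (fun x _ => (Real.exp_pos _).le), hVdef]
    have hprodmeas : Measurable fun ω => ∏ x ∈ Sn, V x ω :=
      Finset.measurable_prod _ fun x _ => hVmeas x
    have hfmeas : Measurable fun ω => ENNReal.ofReal (Real.exp (-(t*η))) * ∏ x ∈ Sn, V x ω :=
      measurable_const.mul hprodmeas
    have hsub : {ω | η * F n ω - U ω ≤ A n ω} ⊆
        {ω | 1 ≤ ENNReal.ofReal (Real.exp (-(t*η))) * ∏ x ∈ Sn, V x ω} := by
      intro ω hω
      simp only [Set.mem_setOf_eq] at hω ⊢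
      rw [hptw ω, ENNReal.one_le_ofReal]
      apply Real.one_le_exp
      have h0 : 0 ≤ A n ω - η * F n ω + U ω := by linarith
      exact mul_nonneg ht0.le h0
    have hstep : μ {ω | η * F n ω - U ω ≤ A n ω}
        ≤ ∫⁻ ω, ENNReal.ofReal (Real.exp (-(t*η))) * ∏ x ∈ Sn, V x ω ∂μ :=
      (measure_mono hsub).trans (by simpa using mul_meas_ge_le_lintegral₀ hfmeas.aemeasurable 1)
    rw [lintegral_const_mul _ hprodmeas, aux_lintegral_prod_indep μ V hVmeas hVindep Sn] at hstep
    have hprodval : ∏ x ∈ Sn, ∫⁻ ω, V x ω ∂μ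
        = ENNReal.ofReal g ^ n * ENNReal.ofReal b ^ (n-1) * ENNReal.ofReal u := by
      rw [hSn, Finset.prod_union hd123, Finset.prod_union hd12, hS1, hS2, hS3,
        Finset.prod_image hinl_inj, Finset.prod_image hinrl_inj, Finset.prod_singleton,
        Finset.prod_congr rfl (fun i _ => Igeom i), Finset.prod_congr rfl (fun i _ => Iber i),
        IU, Finset.prod_const, Finset.prod_const, Finset.card_range, Finset.card_range]
    rw [hprodval] at hstep
    refine hstep.trans (le_of_eq ?_)
    rw [← hE'def,
      ENNReal.ofReal_mul (mul_nonneg (mul_nonneg hE'0.le (pow_nonneg hg0.le n))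
        (pow_nonneg hb0.le (n-1))),
      ENNReal.ofReal_mul (mul_nonneg hE'0.le (pow_nonneg hg0.le n)),
      ENNReal.ofReal_mul hE'0.le, ENNReal.ofReal_pow hg0.le, ENNReal.ofReal_pow hb0.le]
    ring
  -- the complement bound
  have compl : ∀ n : ℕ, 1 ≤ n → μ {ω | η * F n ω - U ω ≤ A n ω} ≤
      ENNReal.ofReal (1 - (1 - β) ^ n * (1 - d)) := by
    intro n hn
    have hinl_inj : ∀ x ∈ Finset.range n, ∀ y ∈ Finset.range n,
        (Sum.inl x : ℕ ⊕ (ℕ ⊕ Unit)) = Sum.inl y → x = y := fun x _ y _ h => Sum.inl.inj h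
    set sets : (ℕ ⊕ (ℕ ⊕ Unit)) → Set ℕ :=
      fun x => Sum.elim (fun _ => {1}) (Sum.elim (fun _ => Set.univ) (fun _ => {0})) x
      with hsets
    have hsets_meas : ∀ x, MeasurableSet (sets x) := by
      intro x
      rcases x with i | x
      · exact measurableSet_singleton 1
      · rcases x with i | u
        · exact MeasurableSet.univ
        · exact measurableSet_singleton 0
    set T1 : Finset (ℕ ⊕ (ℕ ⊕ Unit)) := (Finset.range n).image Sum.inl with hT1
    set T3 : Finset (ℕ ⊕ (ℕ ⊕ Unit)) := {Sum.inr (Sum.inr ())} with hT3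
    have hd13 : Disjoint T1 T3 := by
      rw [Finset.disjoint_left]
      intro x hx1 hx3
      rw [hT3, Finset.mem_singleton] at hx3
      subst hx3
      rw [hT1, Finset.mem_image] at hx1
      obtain ⟨i, _, h⟩ := hx1
      simp at h
    set Sc : Finset (ℕ ⊕ (ℕ ⊕ Unit)) := T1 ∪ T3 with hSc
    have key := hindep.measure_inter_preimage_eq_mul Sc (sets := sets)
      (fun x _ => hsets_meas x)
    -- value of the singleton masses
    have hZ1 : ∀ i : ℕ, μ {ω | Z (Sum.inl i) ω = 1} = ENNReal.ofReal (1 - β) := by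
      intro i
      have h1 := hgeom i 1 (by omega)
      have h2 := hgeom i 2 (by omega)
      norm_num at h1 h2
      rw [show (1 : ENNReal) = ENNReal.ofReal 1 from ENNReal.ofReal_one.symm] at h1
      exact aux_meas_point μ (Z (Sum.inl i)) (hmeas _) 1 1 β hβ0.le h1 h2
    have hZU0 : μ {ω | Z (Sum.inr (Sum.inr ())) ω = 0} = ENNReal.ofReal (1 - d) := by
      have h1 : μ {ω | 0 ≤ Z (Sum.inr (Sum.inr ())) ω} = ENNReal.ofReal 1 := by
        have huniv : {ω | 0 ≤ Z (Sum.inr (Sum.inr ())) ω} = Set.univ := by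
          ext ω; simp
        rw [huniv, measure_univ, ENNReal.ofReal_one]
      have h2 := hU 1
      rw [pow_one] at h2
      exact aux_meas_point μ (Z (Sum.inr (Sum.inr ()))) (hmeas _) 0 1 d hd0 h1 h2
    -- rewrite the product
    have hpre1 : ∀ i : ℕ, Z (Sum.inl i) ⁻¹' ({1} : Set ℕ) = {ω | Z (Sum.inl i) ω = 1} := by
      intro i; rfl
    have hpreU : Z (Sum.inr (Sum.inr ())) ⁻¹' ({0} : Set ℕ)
        = {ω | Z (Sum.inr (Sum.inr ())) ω = 0} := rfl
    have hprodval : ∏ x ∈ Sc, μ (Z x ⁻¹' sets x)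
        = ENNReal.ofReal ((1 - β) ^ n * (1 - d)) := by
      rw [hSc, Finset.prod_union hd13, hT1, hT3, Finset.prod_image hinl_inj,
        Finset.prod_singleton]
      have hfac : ∀ i : ℕ, μ (Z (Sum.inl i) ⁻¹' sets (Sum.inl i)) = ENNReal.ofReal (1 - β) := by
        intro i
        have : sets (Sum.inl i) = ({1} : Set ℕ) := by rw [hsets]; rfl
        rw [this, hpre1 i, hZ1 i]
      have hfacU : μ (Z (Sum.inr (Sum.inr ())) ⁻¹' sets (Sum.inr (Sum.inr ())))
          = ENNReal.ofReal (1 - d) := by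
        have : sets (Sum.inr (Sum.inr ())) = ({0} : Set ℕ) := by rw [hsets]; rfl
        rw [this, hpreU, hZU0]
      rw [Finset.prod_congr rfl (fun i _ => hfac i), hfacU, Finset.prod_const,
        Finset.card_range, ← ENNReal.ofReal_pow h1β.le, ← ENNReal.ofReal_mul (by positivity)]
    -- the good event is contained in the complement
    have hGmeas : MeasurableSet (⋂ x ∈ Sc, Z x ⁻¹' sets x) :=
      Finset.measurableSet_biInter Sc fun x _ => (hmeas x) (hsets_meas x)
    have hGsub : (⋂ x ∈ Sc, Z x ⁻¹' sets x) ⊆ {ω | η * F n ω - U ω ≤ A n ω}ᶜ := by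
      intro ω hω
      simp only [Set.mem_iInter] at hω
      have hZi : ∀ i ∈ Finset.range n, Z (Sum.inl i) ω = 1 := by
        intro i hi
        have hmem : (Sum.inl i : ℕ ⊕ (ℕ ⊕ Unit)) ∈ Sc := by
          rw [hSc, Finset.mem_union, hT1, Finset.mem_image]
          exact Or.inl ⟨i, hi, rfl⟩
        have := hω (Sum.inl i) hmem
        have hs : sets (Sum.inl i) = ({1} : Set ℕ) := by rw [hsets]; rfl
        rw [hs] at this
        simpa using this
      have hZu : Z (Sum.inr (Sum.inr ())) ω = 0 := by
        have hmem : (Sum.inr (Sum.inr ()) : ℕ ⊕ (ℕ ⊕ Unit)) ∈ Sc := by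
          rw [hSc, Finset.mem_union, hT3, Finset.mem_singleton]
          exact Or.inr rfl
        have := hω (Sum.inr (Sum.inr ())) hmem
        have hs : sets (Sum.inr (Sum.inr ())) = ({0} : Set ℕ) := by rw [hsets]; rfl
        rw [hs] at this
        simpa using this
      have hA0 : A n ω = 0 := by
        rw [hA n ω]
        apply Finset.sum_eq_zero
        intro i hi
        rw [hZi i hi]
        norm_num
      have hU0 : U ω = 0 := by
        rw [hUdef ω, hZu]
        norm_num
      have hF1 : 1 ≤ F n ω := by
        rw [hF n ω]
        have : (0:ℝ) ≤ ∑ i ∈ Finset.range (n-1), (Z (Sum.inr (Sum.inl i)) ω : ℝ) :=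
          Finset.sum_nonneg fun i _ => Nat.cast_nonneg _
        linarith
      simp only [Set.mem_compl_iff, Set.mem_setOf_eq, not_le, hA0, hU0, sub_zero]
      have : η * 1 ≤ η * F n ω := mul_le_mul_of_nonneg_left hF1 hη0.le
      linarith
    have hEsub : {ω | η * F n ω - U ω ≤ A n ω} ⊆ (⋂ x ∈ Sc, Z x ⁻¹' sets x)ᶜ :=
      fun ω hωE hωG => hGsub hωG hωE
    calc μ {ω | η * F n ω - U ω ≤ A n ω}
        ≤ μ (⋂ x ∈ Sc, Z x ⁻¹' sets x)ᶜ := measure_mono hEsub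
      _ = 1 - μ (⋂ x ∈ Sc, Z x ⁻¹' sets x) := prob_compl_eq_one_sub hGmeas
      _ = 1 - ENNReal.ofReal ((1 - β) ^ n * (1 - d)) := by rw [key, hprodval]
      _ = ENNReal.ofReal (1 - (1 - β) ^ n * (1 - d)) := by
          rw [← ENNReal.ofReal_one, ← ENNReal.ofReal_sub _ (by positivity)]
  -- combine
  set s : ℝ := -Real.log (g * b) with hsdef
  have hspos : 0 < s := by
    rw [hsdef]; exact neg_pos.2 (Real.log_neg hgb0 hgb1)
  clear_value s
  set C : ℝ := E' * g * u with hCdef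
  have hC0 : 0 < C := by rw [hCdef]; positivity
  clear_value C
  set M : ℝ := max C 1 with hMdef
  have hM1 : (1:ℝ) ≤ M := by rw [hMdef]; exact le_max_right _ _
  have hCM' : C ≤ M := by rw [hMdef]; exact le_max_left _ _
  clear_value M
  have hlogM : 0 ≤ Real.log M := Real.log_nonneg hM1
  set N : ℕ := Nat.ceil (2 * Real.log M / s) + 2 with hNdef
  have hN2 : 2 ≤ N := by omega
  set δN : ℝ := (1 - β) ^ N * (1 - d) with hδNdef
  have hδN0 : 0 < δN := by rw [hδNdef]; positivity
  have hδNle : ∀ n : ℕ, n ≤ N → δN ≤ (1 - β) ^ n * (1 - d) := by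
    intro n hn
    rw [hδNdef]
    exact mul_le_mul_of_nonneg_right (pow_le_pow_of_le_one h1β.le (by linarith) hn) h1d.le
  clear_value δN
  obtain ⟨c, hcdef⟩ : ∃ c : ℝ, c = min (s/2) (δN / (N:ℝ)) := ⟨_, rfl⟩
  have hc0 : 0 < c := by rw [hcdef]; exact lt_min (by linarith) (by positivity)
  have hcs : c ≤ s/2 := by rw [hcdef]; exact min_le_left _ _
  have hcd : c ≤ δN/(N:ℝ) := by rw [hcdef]; exact min_le_right (s/2) (δN/(N:ℝ))
  refine ⟨c, hc0, fun n hn => ?_⟩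
  by_cases hnN : N ≤ n
  · -- large n : use the Chernoff bound
    refine (main n hn).trans ?_
    rw [ENNReal.ofReal_le_ofReal_iff (Real.exp_pos _).le]
    have hsplit : E' * g ^ n * b ^ (n - 1) * u = C * (g * b) ^ (n - 1) := by
      have hgp : g ^ n = g * g ^ (n - 1) := by
        rw [← pow_succ']
        congr 1
        omega
      rw [hgp, mul_pow, hCdef]; ring
    rw [hsplit]
    have hpow : (g * b) ^ (n - 1) = Real.exp (-(s * (n - 1 : ℕ))) := by
      rw [hsdef]
      rw [neg_mul, neg_neg, mul_comm (Real.log (g*b)) ((n-1:ℕ):ℝ), Real.exp_nat_mul,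
        Real.exp_log hgb0]
    rw [hpow]
    have hCM : C ≤ Real.exp (Real.log M) := by
      rw [Real.exp_log (by linarith)]
      exact hCM'
    have hcast : ((n - 1 : ℕ) : ℝ) = (n : ℝ) - 1 := by
      rw [Nat.cast_sub hn]; norm_num
    have hNle : (2 * Real.log M / s) ≤ (n : ℝ) - 2 := by
      have h1 : (2 * Real.log M / s) ≤ ((N : ℕ) : ℝ) - 2 := by
        have := Nat.le_ceil (2 * Real.log M / s)
        have h2 : ((N:ℕ):ℝ) = (Nat.ceil (2 * Real.log M / s) : ℝ) + 2 := by
          rw [hNdef]; push_cast; ring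
        linarith
      have : ((N:ℕ):ℝ) ≤ (n:ℝ) := by exact_mod_cast hnN
      linarith
    have hlogdone : Real.log M - s * ((n:ℝ) - 1) ≤ -(s/2) * n := by
      have h2 : 2 * Real.log M ≤ s * ((n:ℝ) - 2) := by
        rw [div_le_iff₀ hspos] at hNle
        linarith [hNle]
      linarith [h2]
    calc C * Real.exp (-(s * ((n-1:ℕ):ℝ)))
        ≤ Real.exp (Real.log M) * Real.exp (-(s * ((n-1:ℕ):ℝ))) := by
          apply mul_le_mul_of_nonneg_right hCM (Real.exp_pos _).le
      _ = Real.exp (Real.log M - s * ((n:ℝ) - 1)) := by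
          rw [← Real.exp_add, hcast]; ring_nf
      _ ≤ Real.exp (-c * n) := by
          apply Real.exp_le_exp.mpr
          have hc2 : c ≤ s/2 := hcs
          have : (-(s/2)) * n ≤ -c * n := by
            apply mul_le_mul_of_nonneg_right (by linarith) (Nat.cast_nonneg n)
          linarith [hlogdone]
  · -- small n : use the complement bound
    push_neg at hnN
    refine (compl n hn).trans ?_
    rw [ENNReal.ofReal_le_ofReal_iff (Real.exp_pos _).le]
    have hδn : δN ≤ (1 - β) ^ n * (1 - d) := hδNle n (by omega)
    have h1 : 1 - (1 - β) ^ n * (1 - d) ≤ 1 - δN := by linarith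
    have h2 : 1 - δN ≤ Real.exp (-δN) := by
      have := Real.add_one_le_exp (-δN)
      linarith
    have h3 : Real.exp (-δN) ≤ Real.exp (-c * n) := by
      apply Real.exp_le_exp.mpr
      have hcN : c * N ≤ δN := by
        have h5 := hcd
        rw [le_div_iff₀ (by positivity : (0:ℝ) < (N:ℝ))] at h5
        linarith
      have h4 : c * n ≤ c * N := by
        apply mul_le_mul_of_nonneg_left _ hc0.le
        exact_mod_cast hnN.le
      linarith [hcN, h4]
    linarith
end

section
/- Let $(X_i)_{i\geq1}$ be i.i.d. real-valued random variables with $E[X_1] < 0$ and $E[e^{\theta_0 X_1}] < \infty$ for some $\theta_0 > 0$. Then there exists $\theta^* > 0$ with $E[e^{\theta^* X_1}] \leq 1$, and for partial sums $S_m = \sum_{i=1}^m X_i$ (with $S_0 = 0$) and any $c > 0$: $P\left(\sup_{m \geq 0} S_m \geq c\right) \leq e^{-\theta^* c}$. -/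
open MeasureTheory ProbabilityTheory Real Filter Topology

/-- partial sums -/
def pS {Ω : Type*} (X : ℕ → Ω → ℝ) (m : ℕ) (ω : Ω) : ℝ := ∑ i ∈ Finset.range m, X i ω

lemma kingman_aux {Ω : Type*} [MeasurableSpace Ω] (μ : Measure Ω) [IsProbabilityMeasure μ]
    (X : ℕ → Ω → ℝ) (hmeas : ∀ i, Measurable (X i))
    (hindep : iIndepFun X μ)
    (hident : ∀ i, IdentDistrib (X i) (X 0) μ μ)
    (θ : ℝ) (hθ : 0 < θ)
    (hMint : Integrable (fun ω => Real.exp (θ * X 0 ω)) μ)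
    (hM : (∫ ω, Real.exp (θ * X 0 ω) ∂μ) ≤ 1)
    (c : ℝ) (hc : 0 < c) :
    μ {ω | ∃ m : ℕ, c ≤ ∑ i ∈ Finset.range m, X i ω} ≤
      ENNReal.ofReal (Real.exp (-θ * c)) := by
  classical
  have hSmeas : ∀ m, Measurable (pS X m) := fun m =>
    Finset.measurable_sum _ fun i _ => hmeas i
  -- integrability of exp(θ X i)
  have hexpint : ∀ i, Integrable (fun ω => Real.exp (θ * X i ω)) μ := by
    intro i
    have h := (hident i).comp (u := fun x : ℝ => Real.exp (θ * x))
      (Real.measurable_exp.comp (measurable_id.const_mul θ))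
    exact h.integrable_iff.2 hMint
  have hMi : ∀ i, (∫ ω, Real.exp (θ * X i ω) ∂μ) = ∫ ω, Real.exp (θ * X 0 ω) ∂μ := by
    intro i
    exact ((hident i).comp (u := fun x : ℝ => Real.exp (θ * x))
      (Real.measurable_exp.comp (measurable_id.const_mul θ))).integral_eq
  -- key independence lemma
  have hkey : ∀ (n : ℕ) (F : (ℕ → ℝ) → ℝ), Measurable F →
      IndepFun (fun ω => F (fun i => if h : i < n then X i ω else 0))
        (fun ω => Real.exp (θ * X n ω)) μ := by
    intro n F hF
    have h1 : IndepFun (fun ω (i : ↥(Finset.range n)) => X (i : ℕ) ω)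
        (fun ω (i : ↥({n} : Finset ℕ)) => X (i : ℕ) ω) μ :=
      hindep.indepFun_finset (Finset.range n) {n} (by simp) hmeas
    have hE : Measurable (fun (v : ↥(Finset.range n) → ℝ) (i : ℕ) =>
        if h : i < n then v ⟨i, Finset.mem_range.2 h⟩ else 0) := by
      apply measurable_pi_lambda
      intro i
      by_cases h : i < n
      · simpa [h] using measurable_pi_apply (⟨i, Finset.mem_range.2 h⟩ :
          ↥(Finset.range n))
      · simpa [h] using measurable_const
    have hψ : Measurable (fun (v : ↥({n} : Finset ℕ) → ℝ) =>
        Real.exp (θ * v ⟨n, Finset.mem_singleton_self n⟩)) :=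
      by fun_prop
    exact h1.comp (hF.comp hE) hψ
  -- integrability of exp(θ S n)
  have hSint : ∀ n, Integrable (fun ω => Real.exp (θ * pS X n ω)) μ := by
    intro n
    induction n with
    | zero => simpa [pS] using (integrable_const (1 : ℝ) : Integrable (fun _ : Ω => (1:ℝ)) μ)
    | succ n ih =>
      have hFmeas : Measurable (fun w : ℕ → ℝ => Real.exp (θ * ∑ i ∈ Finset.range n, w i)) :=
        Real.measurable_exp.comp ((Finset.measurable_sum _ fun i _ =>
          measurable_pi_apply i).const_mul θ)
      have h := hkey n _ hFmeas
      have heq : (fun ω => Real.exp (θ * ∑ i ∈ Finset.range n,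
          (if h : i < n then X i ω else 0))) = fun ω => Real.exp (θ * pS X n ω) := by
        funext ω
        congr 1
        congr 1
        exact Finset.sum_congr rfl fun i hi => dif_pos (Finset.mem_range.1 hi)
      rw [heq] at h
      have heq2 : (fun ω => Real.exp (θ * pS X (n+1) ω)) =
          (fun ω => Real.exp (θ * pS X n ω)) * (fun ω => Real.exp (θ * X n ω)) := by
        funext ω
        simp only [pS, Finset.sum_range_succ, Pi.mul_apply, mul_add, Real.exp_add]
      rw [heq2]
      exact h.integrable_mul ih (hexpint n)
  -- the sets
  set A : ℕ → Set Ω := fun m => {ω | (∀ k < m, pS X k ω < c) ∧ c ≤ pS X m ω} with hAdef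
  set B : ℕ → Set Ω := fun n => {ω | ∀ k ≤ n, pS X k ω < c} with hBdef
  have hA : ∀ m, MeasurableSet (A m) := by
    intro m
    have : A m = (⋂ (k : ℕ) (_ : k < m), {ω | pS X k ω < c}) ∩ {ω | c ≤ pS X m ω} := by
      ext ω; simp [hAdef, Set.mem_iInter]
    rw [this]
    exact (MeasurableSet.iInter fun k => MeasurableSet.iInter fun _ =>
      measurableSet_lt (hSmeas k) measurable_const).inter
      (measurableSet_le measurable_const (hSmeas m))
  have hB : ∀ n, MeasurableSet (B n) := by
    intro n
    have : B n = ⋂ (k : ℕ) (_ : k ≤ n), {ω | pS X k ω < c} := by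
      ext ω; simp [hBdef, Set.mem_iInter]
    rw [this]
    exact MeasurableSet.iInter fun k => MeasurableSet.iInter fun _ =>
      measurableSet_lt (hSmeas k) measurable_const
  -- main induction
  have main : ∀ n, (∑ m ∈ Finset.range (n+1), ∫ ω in A m, Real.exp (θ * pS X m ω) ∂μ)
      + ∫ ω in B n, Real.exp (θ * pS X n ω) ∂μ ≤ 1 := by
    intro n
    induction n with
    | zero =>
      have hA0 : A 0 = ∅ := by
        ext ω; simp [hAdef, pS, hc.not_ge]
      have hB0 : B 0 = Set.univ := by
        ext ω
        simp only [hBdef, Set.mem_setOf_eq, Set.mem_univ, iff_true, Nat.le_zero]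
        rintro k rfl
        simpa [pS] using hc
      rw [Finset.sum_range_one, hA0, hB0]
      simp [pS]
    | succ n ih =>
      have hSsucc : ∀ ω, pS X (n+1) ω = pS X n ω + X n ω := fun ω =>
        Finset.sum_range_succ _ _
      have hBsplit : B n = A (n+1) ∪ B (n+1) := by
        ext ω
        simp only [hAdef, hBdef, Set.mem_setOf_eq, Set.mem_union]
        constructor
        · intro hω
          by_cases h : c ≤ pS X (n+1) ω
          · exact Or.inl ⟨fun k hk => hω k (Nat.lt_succ_iff.1 hk), h⟩
          · refine Or.inr fun k hk => ?_
            rcases eq_or_lt_of_le hk with rfl | hlt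
            · exact not_le.1 h
            · exact hω k (Nat.lt_succ_iff.1 hlt)
        · rintro (⟨h1, _⟩ | h)
          · exact fun k hk => h1 k (Nat.lt_succ_of_le hk)
          · exact fun k hk => h k (le_trans hk (Nat.le_succ n))
      have hdisj : Disjoint (A (n+1)) (B (n+1)) := by
        rw [Set.disjoint_left]
        rintro ω ⟨_, h2⟩ hBω
        exact absurd (hBω (n+1) le_rfl) (not_lt.2 h2)
      -- the supermartingale step
      have key : ∫ ω in B n, Real.exp (θ * pS X (n+1) ω) ∂μ ≤
          ∫ ω in B n, Real.exp (θ * pS X n ω) ∂μ := by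
        set f : Ω → ℝ := (B n).indicator (fun ω => Real.exp (θ * pS X n ω)) with hfdef
        set g : Ω → ℝ := fun ω => Real.exp (θ * X n ω) with hgdef
        have hsetmeas : MeasurableSet {w : ℕ → ℝ | ∀ k ≤ n, ∑ i ∈ Finset.range k, w i < c} := by
          have : {w : ℕ → ℝ | ∀ k ≤ n, ∑ i ∈ Finset.range k, w i < c}
              = ⋂ (k : ℕ) (_ : k ≤ n), {w : ℕ → ℝ | ∑ i ∈ Finset.range k, w i < c} := by
            ext w; simp [Set.mem_iInter]
          rw [this]
          exact MeasurableSet.iInter fun k => MeasurableSet.iInter fun _ =>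
            measurableSet_lt (Finset.measurable_sum _ fun i _ => measurable_pi_apply i)
              measurable_const
        have hFmeas : Measurable (fun w : ℕ → ℝ =>
            ({w : ℕ → ℝ | ∀ k ≤ n, ∑ i ∈ Finset.range k, w i < c}).indicator
              (fun w => Real.exp (θ * ∑ i ∈ Finset.range n, w i)) w) :=
          Measurable.indicator (Real.measurable_exp.comp
            ((Finset.measurable_sum _ fun i _ => measurable_pi_apply i).const_mul θ)) hsetmeas
        have hfg := hkey n _ hFmeas
        have hfeq : (fun ω => ({w : ℕ → ℝ | ∀ k ≤ n, ∑ i ∈ Finset.range k, w i < c}).indicator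
            (fun w => Real.exp (θ * ∑ i ∈ Finset.range n, w i))
            (fun i => if h : i < n then X i ω else 0)) = f := by
          funext ω
          have hsum : ∀ k ≤ n, ∑ i ∈ Finset.range k,
              (if h : i < n then X i ω else 0) = pS X k ω := by
            intro k hk
            exact Finset.sum_congr rfl fun i hi =>
              dif_pos (lt_of_lt_of_le (Finset.mem_range.1 hi) hk)
          by_cases hω : ω ∈ B n
          · have hmem : (fun i => if h : i < n then X i ω else 0) ∈
                {w : ℕ → ℝ | ∀ k ≤ n, ∑ i ∈ Finset.range k, w i < c} := by
              intro k hk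
              rw [hsum k hk]
              exact hω k hk
            rw [Set.indicator_of_mem hmem, hfdef, Set.indicator_of_mem hω, hsum n le_rfl]
          · have hmem : (fun i => if h : i < n then X i ω else 0) ∉
                {w : ℕ → ℝ | ∀ k ≤ n, ∑ i ∈ Finset.range k, w i < c} := by
              intro hmemc
              exact hω fun k hk => by rw [← hsum k hk]; exact hmemc k hk
            rw [Set.indicator_of_notMem hmem, hfdef, Set.indicator_of_notMem hω]
        rw [hfeq] at hfg
        have hfint : Integrable f μ := (hSint n).indicator (hB n)
        have hfnonneg : 0 ≤ ∫ ω, f ω ∂μ :=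
          integral_nonneg fun ω => Set.indicator_nonneg (fun _ _ => (Real.exp_pos _).le) ω
        calc ∫ ω in B n, Real.exp (θ * pS X (n+1) ω) ∂μ
            = ∫ ω, (f * g) ω ∂μ := by
              rw [← integral_indicator (hB n)]
              congr 1
              funext ω
              by_cases hω : ω ∈ B n <;>
                simp [hfdef, hgdef, Set.indicator_apply, hω, hSsucc ω, mul_add, Real.exp_add]
          _ = (∫ ω, f ω ∂μ) * ∫ ω, g ω ∂μ :=
              IndepFun.integral_mul_eq_mul_integral hfg hfint.aestronglyMeasurable
                (hexpint n).aestronglyMeasurable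
          _ ≤ (∫ ω, f ω ∂μ) * 1 := by
              refine mul_le_mul_of_nonneg_left ?_ hfnonneg
              rw [hgdef]
              calc (∫ ω, Real.exp (θ * X n ω) ∂μ)
                  = ∫ ω, Real.exp (θ * X 0 ω) ∂μ := hMi n
                _ ≤ 1 := hM
          _ = ∫ ω in B n, Real.exp (θ * pS X n ω) ∂μ := by
              rw [mul_one, hfdef, integral_indicator (hB n)]
      calc (∑ m ∈ Finset.range (n+1+1), ∫ ω in A m, Real.exp (θ * pS X m ω) ∂μ)
            + ∫ ω in B (n+1), Real.exp (θ * pS X (n+1) ω) ∂μ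
          = (∑ m ∈ Finset.range (n+1), ∫ ω in A m, Real.exp (θ * pS X m ω) ∂μ)
            + ((∫ ω in A (n+1), Real.exp (θ * pS X (n+1) ω) ∂μ)
              + ∫ ω in B (n+1), Real.exp (θ * pS X (n+1) ω) ∂μ) := by
            rw [Finset.sum_range_succ]; ring
        _ = (∑ m ∈ Finset.range (n+1), ∫ ω in A m, Real.exp (θ * pS X m ω) ∂μ)
            + ∫ ω in B n, Real.exp (θ * pS X (n+1) ω) ∂μ := by
            rw [hBsplit, setIntegral_union hdisj (hB (n+1))
              ((hSint (n+1)).integrableOn) ((hSint (n+1)).integrableOn)]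
        _ ≤ (∑ m ∈ Finset.range (n+1), ∫ ω in A m, Real.exp (θ * pS X m ω) ∂μ)
            + ∫ ω in B n, Real.exp (θ * pS X n ω) ∂μ := by
            exact add_le_add_right key _
        _ ≤ 1 := ih
  -- from the induction to the measure bound
  have hfinal : ∀ n, ∑ m ∈ Finset.range (n+1), (μ (A m)).toReal ≤ Real.exp (-θ * c) := by
    intro n
    have hterm : ∀ m, (μ (A m)).toReal * Real.exp (θ * c) ≤
        ∫ ω in A m, Real.exp (θ * pS X m ω) ∂μ := by
      intro m
      have h1 : ∫ ω in A m, Real.exp (θ * c) ∂μ ≤ ∫ ω in A m, Real.exp (θ * pS X m ω) ∂μ := by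
        refine setIntegral_mono_on (integrableOn_const (measure_ne_top μ _))
          ((hSint m).integrableOn) (hA m) fun ω hω => ?_
        exact Real.exp_le_exp.2 (mul_le_mul_of_nonneg_left hω.2 hθ.le)
      rwa [setIntegral_const, smul_eq_mul] at h1
    have hsum : (∑ m ∈ Finset.range (n+1), (μ (A m)).toReal) * Real.exp (θ * c) ≤ 1 := by
      rw [Finset.sum_mul]
      calc ∑ m ∈ Finset.range (n+1), (μ (A m)).toReal * Real.exp (θ * c)
          ≤ ∑ m ∈ Finset.range (n+1), ∫ ω in A m, Real.exp (θ * pS X m ω) ∂μ :=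
            Finset.sum_le_sum fun m _ => hterm m
        _ ≤ 1 := by
            have hBnonneg : 0 ≤ ∫ ω in B n, Real.exp (θ * pS X n ω) ∂μ :=
              setIntegral_nonneg (hB n) fun ω _ => (Real.exp_pos _).le
            linarith [main n]
    rw [neg_mul, Real.exp_neg, ← one_div, le_div_iff₀ (Real.exp_pos _)]
    exact hsum
  have hEvent : {ω | ∃ m : ℕ, c ≤ ∑ i ∈ Finset.range m, X i ω} = ⋃ m, A m := by
    ext ω
    simp only [Set.mem_setOf_eq, Set.mem_iUnion, hAdef]
    constructor
    · rintro ⟨m, hm⟩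
      have hex : ∃ m, c ≤ pS X m ω := ⟨m, hm⟩
      exact ⟨Nat.find hex, fun k hk => not_le.1 (Nat.find_min hex hk), Nat.find_spec hex⟩
    · rintro ⟨m, _, hm⟩
      exact ⟨m, hm⟩
  rw [hEvent]
  calc μ (⋃ m, A m) ≤ ∑' m, μ (A m) := measure_iUnion_le _
    _ ≤ ENNReal.ofReal (Real.exp (-θ * c)) := by
      rw [ENNReal.tsum_eq_iSup_sum]
      refine iSup_le fun s => ?_
      have hsub : s ⊆ Finset.range (s.sup id + 1) := fun i hi =>
        Finset.mem_range.2 (Nat.lt_succ_of_le (Finset.le_sup (f := id) hi))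
      calc ∑ m ∈ s, μ (A m) ≤ ∑ m ∈ Finset.range (s.sup id + 1), μ (A m) :=
            Finset.sum_le_sum_of_subset hsub
        _ = ENNReal.ofReal (∑ m ∈ Finset.range (s.sup id + 1), (μ (A m)).toReal) := by
            rw [ENNReal.ofReal_sum_of_nonneg fun _ _ => ENNReal.toReal_nonneg]
            exact Finset.sum_congr rfl fun m _ =>
              (ENNReal.ofReal_toReal (measure_ne_top μ _)).symm
        _ ≤ ENNReal.ofReal (Real.exp (-θ * c)) :=
            ENNReal.ofReal_le_ofReal (hfinal (s.sup id))

theorem stmt_7 {Ω : Type*} [MeasurableSpace Ω] (μ : Measure Ω) [IsProbabilityMeasure μ]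
    (X : ℕ → Ω → ℝ) (hmeas : ∀ i, Measurable (X i))
    (hindep : iIndepFun X μ)
    (hident : ∀ i, IdentDistrib (X i) (X 0) μ μ)
    (hint : Integrable (X 0) μ)
    (hmean : ∫ ω, X 0 ω ∂μ < 0)
    (hmgf : ∃ θ₀ : ℝ, 0 < θ₀ ∧ Integrable (fun ω => Real.exp (θ₀ * X 0 ω)) μ) :
    ∃ θstar : ℝ, 0 < θstar ∧ (∫ ω, Real.exp (θstar * X 0 ω) ∂μ) ≤ 1 ∧
      ∀ c : ℝ, 0 < c →
        μ {ω | ∃ m : ℕ, c ≤ ∑ i ∈ Finset.range m, X i ω} ≤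
          ENNReal.ofReal (Real.exp (-θstar * c)) := by
  obtain ⟨θ₀, hθ₀, hint0⟩ := hmgf
  set φ : ℕ → ℝ := fun n => θ₀ / (n + 1) with hφdef
  have hφpos : ∀ n, 0 < φ n := fun n => div_pos hθ₀ (by positivity)
  have hφle : ∀ n, φ n ≤ θ₀ := by
    intro n
    apply div_le_self hθ₀.le
    exact le_add_of_nonneg_left (Nat.cast_nonneg n)
  -- convexity bound
  have hconv : ∀ θ : ℝ, 0 < θ → θ ≤ θ₀ → ∀ x : ℝ,
      Real.exp (θ * x) ≤ (1 - θ / θ₀) + (θ / θ₀) * Real.exp (θ₀ * x) := by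
    intro θ hθ hle x
    have ht0 : 0 ≤ θ / θ₀ := by positivity
    have ht1 : θ / θ₀ ≤ 1 := div_le_one_of_le₀ hle hθ₀.le
    have h := convexOn_exp.2 (Set.mem_univ (0 : ℝ)) (Set.mem_univ (θ₀ * x))
      (sub_nonneg.2 ht1) ht0 (by ring)
    have harg : (1 - θ / θ₀) • (0 : ℝ) + (θ / θ₀) • (θ₀ * x) = θ * x := by
      rw [smul_eq_mul, smul_eq_mul, mul_zero, zero_add]
      field_simp
    rw [harg] at h
    simpa [Real.exp_zero, smul_eq_mul] using h
  -- slope upper bound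
  have hslope : ∀ θ : ℝ, 0 < θ → θ ≤ θ₀ → ∀ x : ℝ,
      (Real.exp (θ * x) - 1) / θ ≤ (Real.exp (θ₀ * x) - 1) / θ₀ := by
    intro θ hθ hle x
    have h := hconv θ hθ hle x
    have h2 : Real.exp (θ * x) - 1 ≤ (θ / θ₀) * (Real.exp (θ₀ * x) - 1) := by
      rw [mul_sub]; linarith
    calc (Real.exp (θ * x) - 1) / θ ≤ ((θ / θ₀) * (Real.exp (θ₀ * x) - 1)) / θ := by gcongr
      _ = (Real.exp (θ₀ * x) - 1) / θ₀ := by field_simp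
  set f : ℕ → Ω → ℝ := fun n ω => (Real.exp (φ n * X 0 ω) - 1) / φ n with hfdef
  set bound : Ω → ℝ := fun ω => |X 0 ω| + (Real.exp (θ₀ * X 0 ω) + 1) / θ₀ with hbounddef
  have hboundint : Integrable bound μ :=
    hint.abs.add ((hint0.add (integrable_const 1)).div_const θ₀)
  have hfmeas : ∀ n, AEStronglyMeasurable (f n) μ := fun n =>
    (((Real.measurable_exp.comp ((hmeas 0).const_mul (φ n))).sub
      measurable_const).div_const (φ n)).aestronglyMeasurable
  have hboundae : ∀ n, ∀ᵐ ω ∂μ, ‖f n ω‖ ≤ bound ω := by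
    intro n
    filter_upwards with ω
    rw [Real.norm_eq_abs, abs_le]
    have hq : 0 ≤ (Real.exp (θ₀ * X 0 ω) + 1) / θ₀ := by positivity
    constructor
    · have h1 : X 0 ω ≤ f n ω := by
        rw [hfdef]
        dsimp only
        rw [le_div_iff₀ (hφpos n)]
        have := Real.add_one_le_exp (φ n * X 0 ω)
        have hcm : X 0 ω * φ n = φ n * X 0 ω := mul_comm _ _
        linarith
      have h2 : -(bound ω) ≤ X 0 ω := by
        have := neg_abs_le (X 0 ω)
        rw [hbounddef]; dsimp only; linarith
      linarith
    · have h1 : f n ω ≤ (Real.exp (θ₀ * X 0 ω) - 1) / θ₀ := hslope _ (hφpos n) (hφle n) _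
      have h2 : (Real.exp (θ₀ * X 0 ω) - 1) / θ₀ ≤ (Real.exp (θ₀ * X 0 ω) + 1) / θ₀ := by
        gcongr; linarith
      have h3 : 0 ≤ |X 0 ω| := abs_nonneg _
      rw [hbounddef]; dsimp only; linarith
  have hlimae : ∀ᵐ ω ∂μ, Tendsto (fun n => f n ω) atTop (𝓝 (X 0 ω)) := by
    filter_upwards with ω
    set x := X 0 ω with hx
    have hD : HasDerivAt (fun θ : ℝ => Real.exp (θ * x)) x 0 := by
      have h1 : HasDerivAt (fun θ : ℝ => θ * x) x 0 := hasDerivAt_mul_const x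
      have h2 := (Real.hasDerivAt_exp (0 * x)).comp 0 h1
      simpa [Function.comp_def] using h2
    have hs := hasDerivAt_iff_tendsto_slope.1 hD
    have hφ0 : Tendsto φ atTop (𝓝[≠] (0 : ℝ)) := by
      apply tendsto_nhdsWithin_of_tendsto_nhds_of_eventually_within
      · have h := (tendsto_const_div_atTop_nhds_zero_nat θ₀).comp (tendsto_add_atTop_nat 1)
        refine h.congr fun n => ?_
        simp [hφdef, Function.comp]
      · filter_upwards with n
        exact (hφpos n).ne'
    have hcomp := hs.comp hφ0
    refine hcomp.congr fun n => ?_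
    show slope (fun θ : ℝ => Real.exp (θ * x)) 0 (φ n) = f n ω
    rw [slope_def_field, hfdef]
    dsimp only
    rw [zero_mul, Real.exp_zero, sub_zero]
  have hDCT := tendsto_integral_of_dominated_convergence bound hfmeas hboundint hboundae hlimae
  have hev : ∀ᶠ n in atTop, (∫ ω, f n ω ∂μ) < 0 := hDCT.eventually_lt_const hmean
  obtain ⟨n, hn⟩ := hev.exists
  have hintθ : Integrable (fun ω => Real.exp (φ n * X 0 ω)) μ := by
    refine ((integrable_const (1:ℝ)).add hint0).mono'
      ((Real.measurable_exp.comp ((hmeas 0).const_mul _)).aestronglyMeasurable)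
      (ae_of_all _ fun ω => ?_)
    rw [Real.norm_eq_abs, Real.abs_exp]
    have h := hconv (φ n) (hφpos n) (hφle n) (X 0 ω)
    have ht0 : 0 ≤ φ n / θ₀ := by positivity
    have ht1 : φ n / θ₀ ≤ 1 := div_le_one_of_le₀ (hφle n) hθ₀.le
    have hE : 0 < Real.exp (θ₀ * X 0 ω) := Real.exp_pos _
    simp only [Pi.add_apply]
    nlinarith [mul_nonneg (sub_nonneg.2 ht1) hE.le]
  have hle1 : (∫ ω, Real.exp (φ n * X 0 ω) ∂μ) ≤ 1 := by
    have heq : (∫ ω, f n ω ∂μ) = ((∫ ω, Real.exp (φ n * X 0 ω) ∂μ) - 1) / φ n := by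
      rw [hfdef]
      dsimp only
      rw [integral_div, integral_sub hintθ (integrable_const 1)]
      simp
    rw [heq] at hn
    by_contra hgt
    push_neg at hgt
    have hpos : 0 < ((∫ ω, Real.exp (φ n * X 0 ω) ∂μ) - 1) / φ n :=
      div_pos (by linarith) (hφpos n)
    linarith
  exact ⟨φ n, hφpos n, hle1, fun c hc =>
    kingman_aux μ X hmeas hindep hident (φ n) (hφpos n) hintθ hle1 c hc⟩
end
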